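/- Any two non-Archimedean norms on a finite-dimensional vector space over a field with the trivial absolute value admit a joint orthogonal basis; that is, there exists a basis (e_1,…,e_N) of V that is simultaneously orthogonal for both norms. -/

import Mathlib

open scoped ENNReal

noncomputable section
attribute [local instance] Classical.propDecidable

/-- An additive non-Archimedean norm on a vector space over a trivially valued field:
`χ : V → ℝ ∪ {+∞}` with `χ v = +∞` iff `v = 0`, invariance under nonzero scalars, and
the ultrametric inequality `χ(v+w) ≥ min (χ v) (χ w)`. -/
structure NAnorm (k V : Type*) [Field k] [AddCommGroup V] [Module k V] where
  toFun : V → EReal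
  ne_bot : ∀ v, toFun v ≠ ⊥
  top_iff : ∀ v, toFun v = ⊤ ↔ v = 0
  smul_eq : ∀ (a : k) (v : V), a ≠ 0 → toFun (a • v) = toFun v
  ultra : ∀ v w, min (toFun v) (toFun w) ≤ toFun (v + w)

namespace NAnorm

variable {k V : Type*} [Field k] [AddCommGroup V] [Module k V]

/-- A basis is `χ`-orthogonal if the norm of any linear combination is the minimum of the
norms of the basis vectors appearing with a nonzero coefficient. -/
def IsOrthogonal {N : ℕ} (χ : NAnorm k V) (b : Module.Basis (Fin N) k V) : Prop :=
  ∀ a : Fin N → k, χ.toFun (∑ i, a i • b i) = ⨅ i ∈ {i | a i ≠ 0}, χ.toFun (b i)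

/-- The real value of the norm (finite on nonzero vectors). -/
noncomputable def val (χ : NAnorm k V) (v : V) : ℝ := (χ.toFun v).toReal

/-- The pointwise minimum of two norms. -/
noncomputable def inf (χ χ' : NAnorm k V) : NAnorm k V where
  toFun v := min (χ.toFun v) (χ'.toFun v)
  ne_bot v h := by
    rcases min_cases (χ.toFun v) (χ'.toFun v) with ⟨h1, _⟩ | ⟨h1, _⟩
    · exact χ.ne_bot v (by rw [← h1]; exact h)
    · exact χ'.ne_bot v (by rw [← h1]; exact h)
  top_iff v := by
    constructor
    · intro h
      have h1 : (⊤ : EReal) ≤ χ.toFun v := by rw [← h]; exact min_le_left _ _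
      exact (χ.top_iff v).1 (le_antisymm le_top h1)
    · intro h
      show min (χ.toFun v) (χ'.toFun v) = ⊤
      rw [(χ.top_iff v).2 h, (χ'.top_iff v).2 h, min_self]
  smul_eq a v ha := by
    show min (χ.toFun (a • v)) (χ'.toFun (a • v)) = min (χ.toFun v) (χ'.toFun v)
    rw [χ.smul_eq a v ha, χ'.smul_eq a v ha]
  ultra v w := by
    refine le_min ?_ ?_
    · exact le_trans (min_le_min (min_le_left _ _) (min_le_left _ _)) (χ.ultra v w)
    · exact le_trans (min_le_min (min_le_right _ _) (min_le_right _ _)) (χ'.ultra v w)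

/-- The Goldman–Iwahori distance `d_∞(χ,χ') = sup_{v ≠ 0} |χ(v) - χ'(v)|`. -/
noncomputable def dInfty (χ χ' : NAnorm k V) : ℝ≥0∞ :=
  ⨆ v : {v : V // v ≠ 0}, ENNReal.ofReal |χ.val v.1 - χ'.val v.1|

/-- The distance `d_p(χ,χ')`, computed from the relative spectrum of `χ,χ'` in a joint
orthogonal basis. -/
noncomputable def dp (p : ℝ) (χ χ' : NAnorm k V) : ℝ :=
  if h : ∃ b : Module.Basis (Fin (Module.finrank k V)) k V, χ.IsOrthogonal b ∧ χ'.IsOrthogonal b then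
    ((Module.finrank k V : ℝ)⁻¹ *
      ∑ j, |χ.val (h.choose j) - χ'.val (h.choose j)| ^ p) ^ (1 / p)
  else 0

/-- The volume of a norm: the mean of its spectrum, computed in an orthogonal basis. -/
noncomputable def vol (χ : NAnorm k V) : ℝ :=
  if h : ∃ b : Module.Basis (Fin (Module.finrank k V)) k V, χ.IsOrthogonal b then
    (Module.finrank k V : ℝ)⁻¹ * ∑ j, χ.val (h.choose j)
  else 0

end NAnorm


namespace NAnorm

variable {k V : Type*} [Field k] [AddCommGroup V] [Module k V]

theorem toFun_zero (χ : NAnorm k V) : χ.toFun 0 = ⊤ := (χ.top_iff 0).2 rfl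

theorem toFun_neg (χ : NAnorm k V) (v : V) : χ.toFun (-v) = χ.toFun v := by
  have := χ.smul_eq (-1) v (by norm_num)
  simpa using this

theorem toFun_ne_top (χ : NAnorm k V) {v : V} (hv : v ≠ 0) : χ.toFun v ≠ ⊤ :=
  fun h => hv ((χ.top_iff v).1 h)

/-- Ultrametric equality when the two values differ. -/
theorem ultra_eq (χ : NAnorm k V) {v w : V} (h : χ.toFun v ≠ χ.toFun w) :
    χ.toFun (v + w) = min (χ.toFun v) (χ.toFun w) := by
  wlog hlt : χ.toFun v < χ.toFun w generalizing v w
  · have hlt' : χ.toFun w < χ.toFun v := lt_of_le_of_ne (not_lt.1 hlt) (Ne.symm h)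
    rw [add_comm, min_comm]
    exact this (Ne.symm h) hlt'
  refine le_antisymm ?_ (χ.ultra v w)
  rw [min_eq_left hlt.le]
  by_contra hgt
  push_neg at hgt
  have h1 : v = (v + w) + (-w) := by abel
  have h2 : min (χ.toFun (v + w)) (χ.toFun (-w)) ≤ χ.toFun v := by
    conv_rhs => rw [h1]
    exact χ.ultra _ _
  rw [χ.toFun_neg] at h2
  exact absurd h2 (not_le.2 (lt_min hgt hlt))

/-- The filtration submodule `{v | t ≤ χ v}`. -/
def filt (χ : NAnorm k V) (t : EReal) : Submodule k V where
  carrier := {v | t ≤ χ.toFun v}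
  zero_mem' := by simp [χ.toFun_zero]
  add_mem' := by
    intro a b ha hb
    exact le_trans (le_min ha hb) (χ.ultra a b)
  smul_mem' := by
    intro c x hx
    rcases eq_or_ne c 0 with rfl | hc
    · simp [χ.toFun_zero]
    · simpa [χ.smul_eq c x hc] using hx

theorem mem_filt (χ : NAnorm k V) {t : EReal} {v : V} : v ∈ χ.filt t ↔ t ≤ χ.toFun v := Iff.rfl

/-- The strict filtration submodule `{v | t < χ v}`. -/
def filtGT (χ : NAnorm k V) (t : EReal) (ht : t ≠ ⊤) : Submodule k V where
  carrier := {v | t < χ.toFun v}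
  zero_mem' := by simp [χ.toFun_zero, lt_top_iff_ne_top, ht]
  add_mem' := by
    intro a b ha hb
    exact lt_of_lt_of_le (lt_min ha hb) (χ.ultra a b)
  smul_mem' := by
    intro c x hx
    rcases eq_or_ne c 0 with rfl | hc
    · simp [χ.toFun_zero, lt_top_iff_ne_top, ht]
    · simpa [χ.smul_eq c x hc] using hx

theorem mem_filtGT (χ : NAnorm k V) {t : EReal} {ht : t ≠ ⊤} {v : V} :
    v ∈ χ.filtGT t ht ↔ t < χ.toFun v := Iff.rfl

/-- In a finite-dimensional space, `χ` attains a maximum on nonzero vectors. -/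
theorem exists_max [FiniteDimensional k V] (χ : NAnorm k V) (hV : ∃ v : V, v ≠ 0) :
    ∃ v : V, v ≠ 0 ∧ ∀ w : V, w ≠ 0 → χ.toFun w ≤ χ.toFun v := by
  obtain ⟨v₀, hv₀⟩ := hV
  obtain ⟨M, hM, hmin⟩ := IsArtinian.set_has_minimal
    ((fun v : V => χ.filt (χ.toFun v)) '' {v | v ≠ 0}) ⟨_, ⟨v₀, hv₀, rfl⟩⟩
  obtain ⟨v, hv, rfl⟩ := hM
  refine ⟨v, hv, fun w hw => ?_⟩
  by_contra hlt
  push_neg at hlt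
  have hsub : χ.filt (χ.toFun w) < χ.filt (χ.toFun v) := by
    refine lt_of_le_of_ne (fun x hx => le_trans hlt.le hx) (fun he => ?_)
    have hvm : v ∈ χ.filt (χ.toFun w) := he ▸ (χ.mem_filt.2 le_rfl)
    exact absurd (χ.mem_filt.1 hvm) (not_le.2 hlt)
  exact hmin _ ⟨w, hw, rfl⟩ hsub

/-- Restriction of a norm to a submodule. -/
def restrict (χ : NAnorm k V) (W : Submodule k V) : NAnorm k W where
  toFun w := χ.toFun (w : V)
  ne_bot w := χ.ne_bot _
  top_iff w := by rw [χ.top_iff]; exact_mod_cast Iff.rfl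
  smul_eq a w ha := χ.smul_eq a (w : V) ha
  ultra v w := χ.ultra (v : V) (w : V)

theorem fin_iInf_succ {n : ℕ} (g : Fin (n + 1) → EReal) :
    ⨅ i, g i = min (g 0) (⨅ j, g (Fin.succ j)) := by
  apply le_antisymm
  · exact le_min (iInf_le _ 0) (le_iInf fun j => iInf_le _ j.succ)
  · refine le_iInf fun i => ?_
    refine Fin.cases ?_ (fun j => ?_) i
    · exact min_le_left _ _
    · exact le_trans (min_le_right _ _) (iInf_le _ j)

theorem iInf_mem_eq_iInf_ite {ι : Type*} (a : ι → k) (f : ι → EReal) :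
    ⨅ i ∈ {i | a i ≠ 0}, f i = ⨅ i, if a i ≠ 0 then f i else ⊤ := by
  refine iInf_congr fun i => ?_
  by_cases h : a i ≠ 0
  · rw [iInf_pos (show i ∈ {i | a i ≠ 0} from h), if_pos h]
  · rw [iInf_neg (show i ∉ {i | a i ≠ 0} from h), if_neg h]

/-- Combination lemma: a splitting line together with an orthogonal basis of the complement
gives an orthogonal basis. -/
theorem isOrthogonal_cons {n : ℕ} (χ : NAnorm k V) (v : V) (U : Submodule k V)
    (b' : Module.Basis (Fin n) k U)
    (key : ∀ (a : k) (u : V), u ∈ U → χ.toFun (a • v + u) = min (χ.toFun (a • v)) (χ.toFun u))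
    (horth : (χ.restrict U).IsOrthogonal b')
    (b : Module.Basis (Fin (n + 1)) k V)
    (hb : ∀ i, b i = Fin.cons (α := fun _ => V) v (fun j => ((b' j : V))) i) :
    χ.IsOrthogonal b := by
  intro a
  have hb0 : b 0 = v := by rw [hb]; rfl
  have hbs : ∀ j : Fin n, b j.succ = (b' j : V) := fun j => by rw [hb]; rfl
  have hsum : ∑ i, a i • b i = a 0 • v + ((∑ j, a j.succ • b' j : U) : V) := by
    rw [Fin.sum_univ_succ, hb0]
    congr 1
    push_cast
    exact Finset.sum_congr rfl fun j _ => by rw [hbs]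
  rw [hsum, key _ _ (Submodule.coe_mem _)]
  have hres : χ.toFun ((∑ j, a j.succ • b' j : U) : V)
      = ⨅ j ∈ {j | a j.succ ≠ 0}, χ.toFun ((b' j : V)) := horth (fun j => a j.succ)
  rw [hres]
  have hsm : χ.toFun (a 0 • v) = if a 0 ≠ 0 then χ.toFun v else ⊤ := by
    by_cases h : a 0 ≠ 0
    · rw [if_pos h, χ.smul_eq _ _ h]
    · push_neg at h
      rw [if_neg (by simpa using h), h, zero_smul, χ.toFun_zero]
  rw [iInf_mem_eq_iInf_ite, iInf_mem_eq_iInf_ite, fin_iInf_succ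
    (fun i => if a i ≠ 0 then χ.toFun (b i) else ⊤), hsm, hb0]
  congr 1
  refine iInf_congr fun j => ?_
  rw [hbs]

end NAnorm

section MainProof

variable {k : Type*} [Field k]

/-- Key splitting: there is a line and complement splitting both norms simultaneously. -/
theorem exists_split {V : Type*} [AddCommGroup V] [Module k V] [FiniteDimensional k V]
    (χ χ' : NAnorm k V) (hV : ∃ v : V, v ≠ 0) :
    ∃ (v : V) (U : Submodule k V), v ≠ 0 ∧ IsCompl (Submodule.span k {v}) U ∧
      (∀ (a : k) (u : V), u ∈ U → χ.toFun (a • v + u) = min (χ.toFun (a • v)) (χ.toFun u)) ∧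
      (∀ (a : k) (u : V), u ∈ U → χ'.toFun (a • v + u) = min (χ'.toFun (a • v)) (χ'.toFun u)) := by
  obtain ⟨v, hv, hmax⟩ := χ.exists_max hV
  set s : EReal := χ'.toFun v with hs
  have hsnetop : s ≠ ⊤ := χ'.toFun_ne_top hv
  set G : Submodule k V := χ'.filtGT s hsnetop with hG
  set L : Submodule k V := Submodule.span k {v} with hL
  have hdisj : L ⊓ G = ⊥ := by
    rw [eq_bot_iff]
    rintro x ⟨hxL, hxG⟩
    obtain ⟨c, rfl⟩ := Submodule.mem_span_singleton.1 hxL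
    rcases eq_or_ne c 0 with rfl | hc
    · simp
    · exfalso
      have hlt : s < χ'.toFun (c • v) := hxG
      rw [χ'.smul_eq c v hc] at hlt
      exact lt_irrefl _ hlt
  obtain ⟨U₂, hU₂⟩ := Submodule.exists_isCompl (L ⊔ G)
  have hcompl : IsCompl L (G ⊔ U₂) := by
    constructor
    · rw [disjoint_iff, eq_bot_iff]
      rintro x ⟨hxL, hxU⟩
      obtain ⟨g, hg, w, hw, rfl⟩ := Submodule.mem_sup.1 hxU
      have hwZ : w ∈ L ⊔ G := by
        have hww : w = (g + w) - g := by abel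
        rw [hww]
        exact Submodule.sub_mem _ (Submodule.mem_sup_left hxL) (Submodule.mem_sup_right hg)
      have hw0 : w = 0 := by simpa using hU₂.disjoint.le_bot ⟨hwZ, hw⟩
      subst hw0
      rw [add_zero] at hxL ⊢
      exact hdisj.le ⟨hxL, hg⟩
    · rw [codisjoint_iff, ← sup_assoc]
      exact hU₂.codisjoint.eq_top
  refine ⟨v, G ⊔ U₂, hv, hcompl, ?_, ?_⟩
  · -- χ splits: v has max χ-value, any complement works
    intro a u hu
    rcases eq_or_ne a 0 with rfl | ha
    · rw [zero_smul, zero_add, χ.toFun_zero, min_eq_right le_top]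
    rcases eq_or_ne u 0 with rfl | hu0
    · rw [add_zero, χ.toFun_zero, min_eq_left le_top]
    have hav : χ.toFun (a • v) = χ.toFun v := χ.smul_eq a v ha
    rcases eq_or_ne (χ.toFun (a • v)) (χ.toFun u) with heq | hne
    · have humax : χ.toFun u = χ.toFun v := by rw [← heq, hav]
      have hsum_ne : a • v + u ≠ 0 := by
        intro h0
        have huL : u ∈ L := by
          have hue : u = -(a • v) := by
            have := eq_neg_of_add_eq_zero_right h0
            exact this
          rw [hue, hL]
          exact Submodule.neg_mem _
            (Submodule.smul_mem _ _ (Submodule.mem_span_singleton_self v))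
        exact hu0 (by simpa using hcompl.disjoint.le_bot ⟨huL, hu⟩)
      rw [heq, min_self, humax]
      refine le_antisymm (hmax _ hsum_ne) ?_
      have hu2 := χ.ultra (a • v) u
      rw [heq, min_self, humax] at hu2
      exact hu2
    · exact χ.ultra_eq hne
  · -- χ' splits
    intro a u hu
    rcases eq_or_ne a 0 with rfl | ha
    · rw [zero_smul, zero_add, χ'.toFun_zero, min_eq_right le_top]
    rcases eq_or_ne u 0 with rfl | hu0
    · rw [add_zero, χ'.toFun_zero, min_eq_left le_top]
    have hav : χ'.toFun (a • v) = s := χ'.smul_eq a v ha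
    rcases eq_or_ne (χ'.toFun (a • v)) (χ'.toFun u) with heq | hne
    · have hus : χ'.toFun u = s := by rw [← heq, hav]
      rw [heq, min_self, hus]
      refine le_antisymm ?_ ?_
      · by_contra hgt
        push_neg at hgt
        have hmem : a • v + u ∈ G := hgt
        obtain ⟨g, hg, w, hw, rfl⟩ := Submodule.mem_sup.1 hu
        have hwZ : w ∈ L ⊔ G := by
          have hww : w = (a • v + (g + w)) - g - a • v := by abel
          rw [hww]
          refine Submodule.sub_mem _ (Submodule.sub_mem _ (Submodule.mem_sup_right hmem)
            (Submodule.mem_sup_right hg)) ?_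
          exact Submodule.mem_sup_left
            (Submodule.smul_mem _ _ (Submodule.mem_span_singleton_self v))
        have hw0 : w = 0 := by simpa using hU₂.disjoint.le_bot ⟨hwZ, hw⟩
        subst hw0
        rw [add_zero] at hus
        have hlt : s < χ'.toFun g := hg
        rw [hus] at hlt
        exact lt_irrefl _ hlt
      · have hu2 := χ'.ultra (a • v) u
        rw [hav, hus, min_self] at hu2
        exact hu2
    · exact χ'.ultra_eq hne

/-- Induction on dimension. -/
theorem joint_orth_aux : ∀ (n : ℕ) (V : Type _) [AddCommGroup V] [Module k V]
    [FiniteDimensional k V], Module.finrank k V = n →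
    ∀ χ χ' : NAnorm k V,
    ∃ b : Module.Basis (Fin n) k V, χ.IsOrthogonal b ∧ χ'.IsOrthogonal b := by
  intro n
  induction n with
  | zero =>
    intro V _ _ _ hr χ χ'
    haveI hsub : Subsingleton V := (Module.finrank_zero_iff (R := k)).1 hr
    refine ⟨(Module.Basis.empty V : Module.Basis (Fin 0) k V), ?_, ?_⟩ <;>
    · intro a
      have h1 : ∑ i, a i • ((Module.Basis.empty V : Module.Basis (Fin 0) k V)) i = 0 := by simp
      rw [h1, (NAnorm.top_iff _ 0).2 rfl]
      exact (eq_top_iff.2 (le_iInf fun i => i.elim0)).symm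
  | succ n ih =>
    intro V _ _ _ hr χ χ'
    have hV : ∃ v : V, v ≠ 0 := by
      by_contra h
      push_neg at h
      have hsub : Subsingleton V := subsingleton_iff_forall_eq 0 |>.2 fun v => by
        by_contra hv; exact hv (h v)
      rw [Module.finrank_zero_iff.2 hsub] at hr
      omega
    obtain ⟨v, U, hv, hcompl, key, key'⟩ := exists_split χ χ' hV
    have hrU : Module.finrank k U = n := by
      have h1 := Submodule.finrank_add_eq_of_isCompl hcompl
      rw [finrank_span_singleton hv] at h1
      omega
    obtain ⟨b', h1, h2⟩ := ih U hrU (χ.restrict U) (χ'.restrict U)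
    have hli : ∀ (c : k), ∀ x ∈ U, c • v + x = 0 → c = 0 := by
      intro c x hx hcx
      by_contra hc
      have hcv : c • v ∈ Submodule.span k {v} :=
        Submodule.smul_mem _ _ (Submodule.mem_span_singleton_self v)
      have hcvU : c • v ∈ U := by
        have hxe : c • v = -x := by
          have := eq_neg_of_add_eq_zero_left hcx
          exact this
        rw [hxe]
        exact Submodule.neg_mem _ hx
      have hcv0 : c • v = 0 := by simpa using hcompl.disjoint.le_bot ⟨hcv, hcvU⟩
      exact hv (by simpa [hc] using hcv0)
    have hsp : ∀ z : V, ∃ c : k, z + c • v ∈ U := by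
      intro z
      have hz : z ∈ Submodule.span k {v} ⊔ U := by
        rw [hcompl.codisjoint.eq_top]; trivial
      obtain ⟨x, hx, u, hu, rfl⟩ := Submodule.mem_sup.1 hz
      obtain ⟨c, rfl⟩ := Submodule.mem_span_singleton.1 hx
      exact ⟨-c, by simpa [add_assoc, add_comm, add_left_comm] using hu⟩
    refine ⟨Module.Basis.mkFinCons v b' hli hsp, ?_, ?_⟩
    · exact NAnorm.isOrthogonal_cons χ v U b' key h1 _
        (fun i => by rw [Module.Basis.coe_mkFinCons]; rfl)
    · exact NAnorm.isOrthogonal_cons χ' v U b' key' h2 _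
        (fun i => by rw [Module.Basis.coe_mkFinCons]; rfl)

end MainProof

/-- Any two non-Archimedean norms on a finite-dimensional vector space over a
trivially valued field admit a joint orthogonal basis. -/
theorem exists_joint_orthogonal_basis {k V : Type*} [Field k] [AddCommGroup V] [Module k V]
    [FiniteDimensional k V] (χ χ' : NAnorm k V) :
    ∃ b : Module.Basis (Fin (Module.finrank k V)) k V, χ.IsOrthogonal b ∧ χ'.IsOrthogonal b :=
  joint_orth_aux (Module.finrank k V) V rfl χ χ'
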